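/- Let P be a finite poset and m ∈ ℕ. A vector x ∈ ℤ^P lies in the dilated order polytope m·Δ(P) = {m·y : y ∈ Δ(P)} if and only if there exist upper sets F₁ ⊇ F₂ ⊇ ⋯ ⊇ F_m of P with x = Σ_{j=1}^m 1_{F_j}; moreover, such a decreasing chain F₁ ⊇ ⋯ ⊇ F_m is unique. Consequently, the number of lattice points of m·Δ(P) equals the number of order-preserving maps from P to the chain {0, 1, …, m}. -/

import Mathlib

/-- The order polytope of a finite poset `P`. -/
def orderPolytope (P : Type*) [PartialOrder P] : Set (P → ℝ) :=
  {x | (∀ u : P, 0 ≤ x u ∧ x u ≤ 1) ∧ ∀ u v : P, u ≤ v → x u ≤ x v}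

/-- The dilation `m·Δ = {m·y : y ∈ Δ}` of a subset of `ℝ^P`. -/
def dilate {P : Type*} (m : ℕ) (s : Set (P → ℝ)) : Set (P → ℝ) :=
  (fun y u => (m : ℝ) * y u) '' s

private lemma opCount (m : ℕ) (n : ℤ) (h0 : 0 ≤ n) (hm : n ≤ m) :
    ((Finset.univ.filter fun j : Fin m => (j:ℤ) < n).card : ℤ) = n := by
  have hk : n.toNat ≤ m := by omega
  have : (Finset.univ.filter fun j : Fin m => (j:ℤ) < n)
      = Finset.univ.filter fun j : Fin m => (j:ℕ) < n.toNat := by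
    apply Finset.filter_congr; intro j _; constructor <;> (intro; omega)
  rw [this]
  rcases eq_or_lt_of_le hk with h | h
  · have : (Finset.univ.filter fun j : Fin m => (j:ℕ) < n.toNat) = Finset.univ := by
      apply Finset.filter_true_of_mem; intro j _; omega
    rw [this]; simp [Finset.card_univ]; omega
  · have : (Finset.univ.filter fun j : Fin m => (j:ℕ) < n.toNat) = Finset.Iio ⟨n.toNat, h⟩ := by
      ext j; simp [Fin.lt_def]
    rw [this, Fin.card_Iio]; simp; omega

private lemma opDownClosed (m : ℕ) (S : Finset (Fin m))
    (hS : ∀ k j : Fin m, k ≤ j → j ∈ S → k ∈ S) (j : Fin m) : j ∈ S ↔ (j:ℕ) < S.card := by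
  constructor
  · intro hj
    by_contra h
    have hsub : Finset.Iic j ⊆ S := fun k hk => hS k j (Finset.mem_Iic.mp hk) hj
    have := Finset.card_le_card hsub
    rw [Fin.card_Iic] at this; omega
  · intro h
    by_contra hj
    have hsub : S ⊆ Finset.Iio j := by
      intro s hs
      simp only [Finset.mem_Iio]
      by_contra hsj
      exact hj (hS j s (le_of_not_gt hsj) hs)
    have := Finset.card_le_card hsub
    rw [Fin.card_Iio] at this; omega

private lemma opMemIff {P : Type*} [PartialOrder P] (m : ℕ) (x : P → ℤ) :
    (fun u => (x u : ℝ)) ∈ dilate m (orderPolytope P) ↔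
      (∀ u, 0 ≤ x u ∧ x u ≤ (m:ℤ)) ∧ ∀ u v : P, u ≤ v → x u ≤ x v := by
  constructor
  · rintro ⟨y, ⟨hy1, hy2⟩, heq⟩
    have heq' : ∀ u, (x u : ℝ) = m * y u := fun u => (congrFun heq u).symm
    have hm0 : (0:ℝ) ≤ (m:ℝ) := by positivity
    refine ⟨fun u => ⟨?_, ?_⟩, fun u v huv => ?_⟩
    · have := mul_nonneg hm0 (hy1 u).1
      rw [← heq'] at this; exact_mod_cast this
    · have := mul_le_mul_of_nonneg_left (hy1 u).2 hm0
      rw [← heq'] at this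
      have : (x u : ℝ) ≤ (m : ℝ) := by simpa using this
      exact_mod_cast this
    · have := mul_le_mul_of_nonneg_left (hy2 u v huv) hm0
      rw [← heq' u, ← heq' v] at this; exact_mod_cast this
  · rintro ⟨hb, hmono⟩
    by_cases hm0 : m = 0
    · subst hm0
      refine ⟨fun _ => 0, ⟨fun u => by norm_num, fun u v _ => le_refl _⟩, ?_⟩
      funext u
      have h1 := (hb u).1; have h2 := (hb u).2
      have : x u = 0 := by omega
      simp [this]
    · have hmpos : (0:ℝ) < (m:ℝ) := by positivity
      refine ⟨fun u => (x u : ℝ) / m, ⟨fun u => ⟨?_, ?_⟩, fun u v huv => ?_⟩, ?_⟩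
      · exact div_nonneg (by exact_mod_cast (hb u).1) hmpos.le
      · rw [div_le_one hmpos]; exact_mod_cast (hb u).2
      · exact div_le_div_of_nonneg_right (by exact_mod_cast hmono u v huv) hmpos.le
      · funext u
        field_simp

/-- A lattice point `x ∈ ℤ^P` lies in `m·Δ(P)` iff it is the sum of the indicator
vectors of a decreasing chain `F₁ ⊇ F₂ ⊇ ⋯ ⊇ F_m` of upper sets of `P`, and such a
chain is unique.  Consequently the number of lattice points of `m·Δ(P)` equals the
number of order-preserving maps from `P` to the chain `{0, 1, …, m}`. -/
theorem latticePoints_dilated_orderPolytope (P : Type*) [PartialOrder P] [Fintype P]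
    (m : ℕ) :
    (∀ x : P → ℤ,
      (fun u => (x u : ℝ)) ∈ dilate m (orderPolytope P) ↔
        ∃! F : Fin m → Set P, (∀ j, IsUpperSet (F j)) ∧ Antitone F ∧
          ∀ u : P, x u = ∑ j : Fin m, Set.indicator (F j) (fun _ => (1 : ℤ)) u) ∧
    Nat.card {x : P → ℤ // (fun u => (x u : ℝ)) ∈ dilate m (orderPolytope P)} =
      Nat.card (P →o Fin (m + 1)) := by
  classical
  -- sum of indicators as a filter card
  have sum_eq : ∀ (F : Fin m → Set P) (u : P),
      (∑ j : Fin m, Set.indicator (F j) (fun _ => (1 : ℤ)) u)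
        = ((Finset.univ.filter fun j : Fin m => u ∈ F j).card : ℤ) := by
    intro F u
    rw [Finset.card_filter]
    push_cast
    apply Finset.sum_congr rfl
    intro j _
    by_cases h : u ∈ F j <;> simp [Set.indicator, h]
  constructor
  · intro x
    rw [opMemIff]
    constructor
    · rintro ⟨hb, hmono⟩
      refine ⟨fun j => {u | (j:ℤ) < x u}, ⟨?_, ?_, ?_⟩, ?_⟩
      · intro j u v huv hu
        exact lt_of_lt_of_le hu (hmono u v huv)
      · intro j k hjk
        intro u hu
        have : (j:ℤ) ≤ (k:ℤ) := by exact_mod_cast hjk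
        exact lt_of_le_of_lt this hu
      · intro u
        rw [sum_eq]
        have h := (opCount m (x u) (hb u).1 (hb u).2).symm
        convert h using 3
        ext j
        simp
      · -- uniqueness
        rintro F ⟨hup, hanti, hsum⟩
        funext j
        ext u
        have hdc : ∀ k l : Fin m, k ≤ l → u ∈ F l → u ∈ F k := fun k l hkl hl =>
          hanti hkl hl
        set S : Finset (Fin m) := Finset.univ.filter fun j => u ∈ F j with hSdef
        have hScl : ∀ k l : Fin m, k ≤ l → l ∈ S → k ∈ S := by
          intro k l hkl hl
          simp only [hSdef, Finset.mem_filter, Finset.mem_univ, true_and] at *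
          exact hdc k l hkl hl
        have hcard : x u = (S.card : ℤ) := by rw [hsum u, sum_eq]
        have hkey := opDownClosed m S hScl j
        have hmem : u ∈ F j ↔ j ∈ S := by
          simp [hSdef]
        simp only [Set.mem_setOf_eq]
        rw [hmem, hkey, hcard]
        constructor <;> (intro; omega)
    · rintro ⟨F, ⟨hup, hanti, hsum⟩, _⟩
      constructor
      · intro u
        rw [hsum u, sum_eq]
        constructor
        · exact_mod_cast Nat.zero_le _
        · have h := Finset.card_filter_le (Finset.univ : Finset (Fin m)) (fun j => u ∈ F j)
          simp only [Finset.card_univ, Fintype.card_fin] at h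
          exact_mod_cast h
      · intro u v huv
        rw [hsum u, hsum v, sum_eq, sum_eq]
        have : (Finset.univ.filter fun j : Fin m => u ∈ F j)
            ⊆ Finset.univ.filter fun j : Fin m => v ∈ F j := by
          intro j hj
          simp only [Finset.mem_filter, Finset.mem_univ, true_and] at *
          exact hup j huv hj
        exact_mod_cast Finset.card_le_card this
  · -- cardinality via equivalence
    have e : {x : P → ℤ // (fun u => (x u : ℝ)) ∈ dilate m (orderPolytope P)} ≃
        (P →o Fin (m + 1)) := by
      refine
        { toFun := fun x =>
            ⟨fun u => ⟨(x.1 u).toNat, ?_⟩, ?_⟩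
          invFun := fun f => ⟨fun u => ((f u : ℕ) : ℤ), ?_⟩
          left_inv := ?_
          right_inv := ?_ }
      · have := ((opMemIff m x.1).mp x.2).1 u
        omega
      · intro u v huv
        have h := ((opMemIff m x.1).mp x.2).2 u v huv
        have h1 := ((opMemIff m x.1).mp x.2).1 u
        simp only [Fin.mk_le_mk]
        omega
      · rw [opMemIff]
        refine ⟨fun u => ⟨by positivity, ?_⟩, fun u v huv => ?_⟩
        · have := (f u).2; exact_mod_cast Nat.lt_succ_iff.mp this
        · exact_mod_cast (f.monotone huv : f u ≤ f v)
      · intro x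
        ext u
        have h1 := ((opMemIff m x.1).mp x.2).1 u
        show (((x.1 u).toNat : ℕ) : ℤ) = x.1 u
        omega
      · intro f
        ext u
        simp
    rw [Nat.card_eq_of_bijective e e.bijective]
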